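/- Let m ∈ ℕ, m ≥ 2, λ = ±im, θ ≥ 2/m real, and let p_{λ,k} be the polynomials with ∂^k e^{±i x^m} = p_{λ,k}(x) e^{±i x^m}. Then there is a strictly unbounded sequence of positive integers k_j (namely k_j the smallest integer in [4jm/(m-1), (4j+1)m/(m-1)]) such that |p_{λ,k_j}(k_j^θ)| ≥ (1/2) m^{k_j} k_j^{θ k_j (m-1)} for all j ≥ 1. -/

import Mathlib

open Polynomial Finset

noncomputable def cc (m : ℕ) : ℕ → ℕ → ℝ
  | 0, 0 => 1
  | 0, _+1 => 0
  | _+1, 0 => 1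
  | n+1, t+1 => cc m n (t+1) + ((n*(m-1) - m*t : ℕ) : ℝ) * cc m n t

lemma cc_zero (m n : ℕ) : cc m n 0 = 1 := by cases n <;> simp [cc]

lemma cc_nonneg (m : ℕ) : ∀ n t, 0 ≤ cc m n t := by
  intro n
  induction n with
  | zero => intro t; cases t <;> simp [cc]
  | succ n ih =>
    intro t
    cases t with
    | zero => simp [cc]
    | succ t =>
      simp only [cc]
      have := ih (t+1); have := ih t
      have : (0:ℝ) ≤ ((n*(m-1) - m*t : ℕ) : ℝ) := Nat.cast_nonneg _
      positivity

lemma cc_vanish (m : ℕ) (hm : 1 ≤ m) : ∀ n t, n*(m-1) < m*t → cc m n t = 0 := by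
  obtain ⟨d, rfl⟩ : ∃ d, m = d + 1 := ⟨m - 1, by omega⟩
  simp only [Nat.add_sub_cancel]
  intro n
  induction n with
  | zero =>
    intro t ht
    cases t with
    | zero => omega
    | succ t => simp [cc]
  | succ n ih =>
    intro t ht
    cases t with
    | zero => simp at ht
    | succ t =>
      have h1 : n*d < (d+1)*(t+1) := by nlinarith
      have h2' : n*d ≤ (d+1)*t := by nlinarith
      simp [cc, ih (t+1) h1, Nat.sub_eq_zero_of_le h2']

lemma cc_def4 (m n t : ℕ) :
    cc m (n+1) (t+1) = cc m n (t+1) + ((n*(m-1) - m*t : ℕ) : ℝ) * cc m n t := by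
  simp [cc]

lemma cc_def2 (m t : ℕ) : cc m 0 (t+1) = 0 := by simp [cc]

lemma cc_gt (m : ℕ) : ∀ n t, n < t → cc m n t = 0 := by
  intro n
  induction n with
  | zero => intro t ht; cases t with
    | zero => omega
    | succ t => exact cc_def2 m t
  | succ n ih =>
    intro t ht
    cases t with
    | zero => omega
    | succ t => rw [cc_def4, ih (t+1) (by omega), ih t (by omega)]; ring

lemma pow_add_aux (a b : ℝ) (ha : 0 ≤ a) (hb : 0 ≤ b) :
    ∀ t : ℕ, a^(t+1) + (t+1)*b*a^t ≤ (a+b)^(t+1) := by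
  intro t
  induction t with
  | zero => simp
  | succ t ih =>
    have h2 : (a+b) * (a^(t+1) + ((t:ℝ)+1)*b*a^t) ≤ (a+b) * (a+b)^(t+1) := by
      apply mul_le_mul_of_nonneg_left _ (by linarith)
      push_cast at ih ⊢; linarith
    have expand : (a+b) * (a^(t+1) + ((t:ℝ)+1)*b*a^t)
        = a^(t+2) + ((t:ℝ)+2)*b*a^(t+1) + ((t:ℝ)+1)*b^2*a^t := by ring
    have hnn : 0 ≤ ((t:ℝ)+1)*b^2*a^t := by positivity
    have h4 : (a+b) * (a+b)^(t+1) = (a+b)^(t+2) := by ring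
    push_cast
    nlinarith
lemma cc_bound (m : ℕ) (hm : 1 ≤ m) :
    ∀ n t, cc m n t * (Nat.factorial t : ℝ) ≤ ((m-1 : ℝ) * n * (n-1) / 2)^t := by
  intro n
  induction n with
  | zero =>
    intro t
    cases t with
    | zero => simp [cc_zero]
    | succ t => simp [cc_def2]
  | succ n ih =>
    intro t
    have hm' : (1:ℝ) ≤ m := by exact_mod_cast hm
    cases t with
    | zero => simp [cc_zero]
    | succ t =>
      have hA : (0:ℝ) ≤ (m-1 : ℝ) * n * (n-1) / 2 := by
        rcases Nat.eq_zero_or_pos n with h | h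
        · simp [h]
        · have h1 : (1:ℝ) ≤ n := by exact_mod_cast h
          have := mul_nonneg (mul_nonneg (by linarith : (0:ℝ) ≤ (m:ℝ)-1) (by linarith : (0:ℝ) ≤ (n:ℝ))) (by linarith : (0:ℝ) ≤ (n:ℝ)-1)
          linarith
      set a : ℝ := (m-1 : ℝ) * n * (n-1) / 2 with ha_def
      have hb : (0:ℝ) ≤ (m-1:ℝ) * n := mul_nonneg (by linarith) (Nat.cast_nonneg n)
      have key : a + (m-1:ℝ)*n = (m-1 : ℝ) * (n+1) * ((n:ℝ)+1-1) / 2 := by ring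
      rw [cc_def4]
      have hd : ((n*(m-1) - m*t : ℕ) : ℝ) ≤ (m-1:ℝ)*n := by
        have h1 : (n*(m-1) - m*t : ℕ) ≤ n*(m-1) := Nat.sub_le _ _
        calc ((n*(m-1) - m*t : ℕ) : ℝ) ≤ ((n*(m-1) : ℕ) : ℝ) := by exact_mod_cast h1
          _ = (m-1:ℝ)*n := by push_cast [Nat.cast_sub hm]; ring
      have hfac : (Nat.factorial (t+1) : ℝ) = ((t:ℝ)+1) * (Nat.factorial t : ℝ) := by
        push_cast [Nat.factorial_succ]; ring
      have hfnn : (0:ℝ) ≤ (Nat.factorial t : ℝ) := by positivity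
      have e1 : cc m n (t+1) * (Nat.factorial (t+1) : ℝ) ≤ a^(t+1) := ih (t+1)
      have e2 : ((n*(m-1) - m*t : ℕ) : ℝ) * cc m n t * (Nat.factorial (t+1) : ℝ)
          ≤ ((t:ℝ)+1) * ((m-1:ℝ)*n) * a^t := by
        rw [hfac]
        have hc := cc_nonneg m n t
        have hdnn : (0:ℝ) ≤ ((n*(m-1) - m*t : ℕ) : ℝ) := Nat.cast_nonneg _
        have s1 : ((n*(m-1) - m*t : ℕ) : ℝ) * (cc m n t * (Nat.factorial t : ℝ)) ≤ ((m-1:ℝ)*n) * a^t :=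
          mul_le_mul hd (ih t) (mul_nonneg hc hfnn) hb
        nlinarith [mul_le_mul_of_nonneg_left s1 (show (0:ℝ) ≤ (t:ℝ)+1 by positivity)]
      have e3 := pow_add_aux a ((m-1:ℝ)*n) hA hb t
      calc (cc m n (t+1) + ((n*(m-1) - m*t : ℕ) : ℝ) * cc m n t) * (Nat.factorial (t+1) : ℝ)
          ≤ a^(t+1) + ((t:ℝ)+1) * ((m-1:ℝ)*n) * a^t := by
            rw [add_mul]; exact add_le_add e1 e2
        _ ≤ (a + (m-1:ℝ)*n)^(t+1) := by push_cast at e3 ⊢; nlinarith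
        _ = ((m-1 : ℝ) * (n+1) * ((n:ℝ)+1-1) / 2)^(t+1) := by rw [key]
        _ = ((m-1 : ℝ) * ((n:ℕ)+1:ℕ) * (((n:ℕ)+1:ℕ)-1) / 2)^(t+1) := by push_cast; ring

lemma term_eq (m : ℕ) (hm : 1 ≤ m) (lam : ℂ) (n t : ℕ) :
    C (lam^(n-t) * (cc m n (t+1):ℂ)) * X^((n*(m-1) - m*(t+1)) + (m-1))
    + C (lam^(n-t) * (cc m n t:ℂ) * ((n*(m-1) - m*t : ℕ):ℂ)) * X^((n*(m-1) - m*t) - 1)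
    = C (lam^(n-t) * (cc m (n+1) (t+1):ℂ)) * X^((n+1)*(m-1) - m*(t+1)) := by
  rw [cc_def4]
  have hsplit : (lam^(n-t) * ((cc m n (t+1) + ((n*(m-1) - m*t : ℕ) : ℝ) * cc m n t : ℝ):ℂ))
      = lam^(n-t) * (cc m n (t+1):ℂ) + lam^(n-t) * (cc m n t:ℂ) * ((n*(m-1) - m*t : ℕ):ℂ) := by
    push_cast; ring
  rw [hsplit, map_add, add_mul]
  rcases le_or_gt (m*(t+1)) (n*(m-1)) with hA | hB
  · have e1 : (n*(m-1) - m*(t+1)) + (m-1) = (n+1)*(m-1) - m*(t+1) := by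
      have h1 : m*(t+1) = m*t + m := by ring
      have h2 : (n+1)*(m-1) = n*(m-1) + (m-1) := by ring
      omega
    have e2 : (n*(m-1) - m*t) - 1 = (n+1)*(m-1) - m*(t+1) := by
      have h1 : m*(t+1) = m*t + m := by ring
      have h2 : (n+1)*(m-1) = n*(m-1) + (m-1) := by ring
      omega
    rw [e1, e2]
  · have hz1 : cc m n (t+1) = 0 := cc_vanish m hm n (t+1) hB
    rcases le_or_gt (m*t) (n*(m-1)) with hC | hD
    · rcases Nat.eq_or_lt_of_le hC with heq | hlt
      · have hz2 : (n*(m-1) - m*t) = 0 := by omega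
        simp [hz1, hz2]
      · have e2 : (n*(m-1) - m*t) - 1 = (n+1)*(m-1) - m*(t+1) := by
          have h1 : m*(t+1) = m*t + m := by ring
          have h2 : (n+1)*(m-1) = n*(m-1) + (m-1) := by ring
          omega
        rw [e2]
        simp [hz1]
    · have hz2 : cc m n t = 0 := cc_vanish m hm n t hD
      simp [hz1, hz2]

lemma prep (m : ℕ) (hm : 1 ≤ m) (lam : ℂ) (p : ℕ → Polynomial ℂ) (hp0 : p 0 = 1)
    (hprec : ∀ k, p (k+1) = C lam * X^(m-1) * p k + derivative (p k)) :
    ∀ n, p n = ∑ t ∈ range (n+1), C (lam^(n-t) * (cc m n t : ℂ)) * X^(n*(m-1) - m*t) := by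
  intro n
  induction n with
  | zero => simpa [cc_zero] using hp0
  | succ n ih =>
    rw [hprec n, ih, Finset.mul_sum, derivative_sum]
    have hF : ∀ t ∈ range (n+1),
        C lam * X^(m-1) * (C (lam^(n-t) * (cc m n t : ℂ)) * X^(n*(m-1) - m*t))
        = C (lam^(n+1-t) * (cc m n t : ℂ)) * X^((n*(m-1) - m*t) + (m-1)) := by
      intro t ht
      simp only [mem_range] at ht
      have h : lam * lam^(n-t) = lam^(n+1-t) := by
        rw [← pow_succ']
        congr 1
        omega
      rw [← h]; simp only [map_mul]
      ring
    rw [Finset.sum_congr rfl hF]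
    have hG : ∀ t ∈ range (n+1),
        derivative (C (lam^(n-t) * (cc m n t : ℂ)) * X^(n*(m-1) - m*t))
        = C (lam^(n-t) * (cc m n t : ℂ) * ((n*(m-1) - m*t : ℕ):ℂ)) * X^((n*(m-1) - m*t) - 1) := by
      intro t ht
      rw [derivative_C_mul_X_pow]
    rw [Finset.sum_congr rfl hG]
    have hext : ∑ t ∈ range (n+1), C (lam^(n+1-t) * (cc m n t : ℂ)) * X^((n*(m-1) - m*t) + (m-1))
        = ∑ t ∈ range (n+2), C (lam^(n+1-t) * (cc m n t : ℂ)) * X^((n*(m-1) - m*t) + (m-1)) := by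
      rw [Finset.sum_range_succ (n := n+1)]
      simp [cc_gt m n (n+1) (by omega)]
    rw [hext, Finset.sum_range_succ' _ (n+1), Finset.sum_range_succ' _ (n+1)]
    have hAB : (∑ t ∈ range (n+1), C (lam^(n+1-(t+1)) * (cc m n (t+1) : ℂ)) * X^((n*(m-1) - m*(t+1)) + (m-1)))
        + ∑ t ∈ range (n+1), C (lam^(n-t) * (cc m n t : ℂ) * ((n*(m-1) - m*t : ℕ):ℂ)) * X^((n*(m-1) - m*t) - 1)
        = ∑ t ∈ range (n+1), C (lam^(n+1-(t+1)) * (cc m (n+1) (t+1) : ℂ)) * X^((n+1)*(m-1) - m*(t+1)) := by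
      rw [← Finset.sum_add_distrib]
      apply Finset.sum_congr rfl
      intro t ht
      have h1 : n + 1 - (t+1) = n - t := by omega
      rw [h1]
      exact term_eq m hm lam n t
    have hF0 : C (lam^(n+1-0) * (cc m n 0 : ℂ)) * X^((n*(m-1) - m*0) + (m-1))
        = C (lam^(n+1-0) * (cc m (n+1) 0 : ℂ)) * X^((n+1)*(m-1) - m*0) := by
      have h0 : (n*(m-1) - m*0) + (m-1) = (n+1)*(m-1) - m*0 := by
        have : (n+1)*(m-1) = n*(m-1) + (m-1) := by ring
        omega
      rw [h0, cc_zero, cc_zero]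
    rw [← hAB, ← hF0]
    ring

lemma main_est (m : ℕ) (hm : 2 ≤ m) (lam : ℂ)
    (hlam : lam = Complex.I * m ∨ lam = -(Complex.I * m))
    (θ : ℝ) (hθ : 2 / (m : ℝ) ≤ θ)
    (p : ℕ → Polynomial ℂ) (hp0 : p 0 = 1)
    (hprec : ∀ k, p (k + 1) = C lam * X ^ (m - 1) * p k + derivative (p k))
    (k : ℕ) (hk : 2 ≤ k) :
    (1 / 2 : ℝ) * (m : ℝ) ^ k * (k : ℝ) ^ (θ * (k : ℝ) * ((m : ℝ) - 1))
      ≤ ‖(p k).eval (((k : ℝ) ^ θ : ℝ) : ℂ)‖ := by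
  have hm1 : (1:ℝ) ≤ m := by exact_mod_cast (by omega : 1 ≤ m)
  have hmpos : (0:ℝ) < m := by linarith
  have hk1 : (1:ℝ) ≤ (k:ℝ) := by exact_mod_cast (by omega : 1 ≤ k)
  have hθ0 : 0 ≤ θ := le_trans (by positivity) hθ
  set x : ℝ := (k:ℝ)^θ with hx_def
  have hx1 : 1 ≤ x := Real.one_le_rpow hk1 hθ0
  have hx0 : 0 < x := by linarith
  have hθm : 2 ≤ θ * m := by
    rw [div_le_iff₀ hmpos] at hθ; linarith
  have hxm : (k:ℝ)^(2:ℕ) ≤ x^m := by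
    have e1 : x^(m:ℕ) = (k:ℝ)^(θ*m) := by
      rw [← Real.rpow_natCast x m, hx_def, ← Real.rpow_mul (by positivity)]
    have e2 : (k:ℝ)^(2:ℕ) = (k:ℝ)^((2:ℕ):ℝ) := (Real.rpow_natCast _ 2).symm
    rw [e1, e2]
    exact Real.rpow_le_rpow_of_exponent_le hk1 (by exact_mod_cast hθm)
  have habs : ‖lam‖ = m := by
    rcases hlam with h | h <;> subst h <;>
      simp [Complex.norm_def, Complex.normSq_apply]
  have hre0 : (lam⁻¹).re = 0 := by
    rcases hlam with h | h <;> subst h <;> simp [Complex.inv_re, Complex.normSq_apply]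
  have hlam0 : lam ≠ 0 := by
    intro h; rw [h] at habs; simp at habs; linarith
  -- the sum S
  set S : ℂ := ∑ t ∈ range (k+1), ((cc m k t * x^(k*(m-1) - m*t) : ℝ):ℂ) * (lam⁻¹)^t with hS_def
  have heval : (p k).eval ((x:ℝ):ℂ) = lam^k * S := by
    rw [prep m (by omega) lam p hp0 hprec k]
    rw [eval_finset_sum, hS_def, Finset.mul_sum]
    apply Finset.sum_congr rfl
    intro t ht
    simp only [mem_range] at ht
    have hzp : lam^(k-t) = lam^k * (lam⁻¹)^t := by
      rw [inv_pow, eq_comm, mul_inv_eq_iff_eq_mul₀ (pow_ne_zero _ hlam0), ← pow_add]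
      congr 1; omega
    simp only [eval_mul, eval_pow, eval_C, eval_X, hzp]
    push_cast
    ring
  rw [heval]
  rw [norm_mul, norm_pow, habs]
  -- reduce to bound on S
  have hxe0 : x^((k*(m-1)) : ℕ) = (k:ℝ)^(θ * (k:ℝ) * ((m:ℝ)-1)) := by
    rw [hx_def, ← Real.rpow_natCast ((k:ℝ)^θ) _, ← Real.rpow_mul (by positivity)]
    congr 1
    push_cast [Nat.cast_sub (by omega : 1 ≤ m)]
    ring
  rw [← hxe0]
  have hSb : (1/2:ℝ) * x^(k*(m-1)) ≤ ‖S‖ := by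
    -- key per-term bound
    have key : ∀ s : ℕ, cc m k s * x^(k*(m-1) - m*s) * (1/m:ℝ)^s
        ≤ x^(k*(m-1)) * (1/2:ℝ)^s / (Nat.factorial s : ℝ) := by
      intro s
      rcases le_or_gt (m*s) (k*(m-1)) with h | h
      · have h1 := cc_bound m (by omega) k s
        have hAnn : (0:ℝ) ≤ ((m:ℝ)-1) * k * ((k:ℝ)-1) / 2 :=
          div_nonneg (mul_nonneg (mul_nonneg (by linarith) (by linarith)) (by linarith)) (by norm_num)
        have hA : ((m:ℝ)-1) * k * ((k:ℝ)-1) / 2 ≤ (m:ℝ)/2 * x^m := by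
          have h2 : (m:ℝ)/2 * (k:ℝ)^(2:ℕ) ≤ (m:ℝ)/2 * x^m := by
            apply mul_le_mul_of_nonneg_left hxm (by positivity)
          have h3 : ((m:ℝ)-1) * k * ((k:ℝ)-1) / 2 ≤ (m:ℝ)/2 * (k:ℝ)^(2:ℕ) := by
            nlinarith
          linarith
        have h2 : (((m:ℝ)-1) * k * ((k:ℝ)-1) / 2)^s ≤ ((m:ℝ)/2 * x^m)^s :=
          pow_le_pow_left₀ hAnn hA s
        have h3 : (x^m)^s * x^(k*(m-1) - m*s) = x^(k*(m-1)) := by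
          rw [← pow_mul, ← pow_add]
          congr 1
          omega
        rw [le_div_iff₀ (by positivity : (0:ℝ) < (Nat.factorial s : ℝ))]
        calc cc m k s * x^(k*(m-1) - m*s) * (1/m:ℝ)^s * (Nat.factorial s : ℝ)
            = (cc m k s * (Nat.factorial s : ℝ)) * (x^(k*(m-1) - m*s) * (1/m:ℝ)^s) := by ring
          _ ≤ (((m:ℝ)-1) * k * ((k:ℝ)-1) / 2)^s * (x^(k*(m-1) - m*s) * (1/m:ℝ)^s) := by
              apply mul_le_mul_of_nonneg_right h1 (by positivity)
          _ ≤ ((m:ℝ)/2 * x^m)^s * (x^(k*(m-1) - m*s) * (1/m:ℝ)^s) := by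
              apply mul_le_mul_of_nonneg_right h2 (by positivity)
          _ = ((m:ℝ)/2 * (1/m:ℝ))^s * ((x^m)^s * x^(k*(m-1) - m*s)) := by
              rw [mul_pow, mul_pow]; ring
          _ = (1/2:ℝ)^s * x^(k*(m-1)) := by
              rw [h3, show (m:ℝ)/2 * (1/m:ℝ) = 1/2 by field_simp]
          _ = x^(k*(m-1)) * (1/2:ℝ)^s := by ring
      · rw [cc_vanish m (by omega) k s h]
        have : (0:ℝ) ≤ x^(k*(m-1)) * (1/2:ℝ)^s / (Nat.factorial s : ℝ) := by positivity
        simpa using this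
    obtain ⟨k2, hk2⟩ : ∃ k2, k = k2 + 2 := ⟨k-2, by omega⟩
    set f : ℕ → ℝ := fun t => cc m k t * x^(k*(m-1) - m*t) * ((lam⁻¹)^t).re with hf_def
    have hSre : S.re = ∑ t ∈ range (k+1), f t := by
      rw [hS_def, Complex.re_sum]
      apply Finset.sum_congr rfl
      intro t ht
      simp only [hf_def, Complex.re_ofReal_mul]
    have hsplit : ∑ t ∈ range (k+1), f t = (∑ t ∈ range (k2+1), f (t+2)) + f 1 + f 0 := by
      have e : k + 1 = (k2+2)+1 := by omega
      rw [e, Finset.sum_range_succ' f (k2+2), Finset.sum_range_succ' (fun t => f (t+1)) (k2+1)]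
    have hf0 : f 0 = x^(k*(m-1)) := by simp [hf_def, cc_zero]
    have hf1 : f 1 = 0 := by
      show cc m k 1 * x^(k*(m-1) - m*1) * ((lam⁻¹)^1).re = 0
      rw [pow_one, hre0, mul_zero]
    have hterm : ∀ t : ℕ, |f (t+2)| ≤ x^(k*(m-1)) * (2*(1/4:ℝ)^(t+2)) := by
      intro t
      have hnn : 0 ≤ cc m k (t+2) * x^(k*(m-1)-m*(t+2)) :=
        mul_nonneg (cc_nonneg m k (t+2)) (by positivity)
      have e1 : |f (t+2)| ≤ cc m k (t+2) * x^(k*(m-1)-m*(t+2)) * (1/m:ℝ)^(t+2) := by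
        rw [hf_def]
        simp only []
        rw [abs_mul, abs_of_nonneg hnn]
        apply mul_le_mul_of_nonneg_left _ hnn
        calc |((lam⁻¹)^(t+2)).re| ≤ ‖(lam⁻¹)^(t+2)‖ := Complex.abs_re_le_norm _
          _ = (1/m:ℝ)^(t+2) := by rw [norm_pow, norm_inv, habs]; norm_num
      have e2 := key (t+2)
      have e3 : x^(k*(m-1)) * (1/2:ℝ)^(t+2) / (Nat.factorial (t+2) : ℝ)
          ≤ x^(k*(m-1)) * (2*(1/4:ℝ)^(t+2)) := by
        have hf2 : (2:ℝ)^(t+1) ≤ (Nat.factorial (t+2) : ℝ) := by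
          have := @Nat.factorial_mul_pow_le_factorial 1 (t+1)
          have e : 1 + (t+1) = t+2 := by omega
          rw [e, Nat.factorial_one, one_mul] at this
          exact_mod_cast this
        have h5 : x^(k*(m-1)) * (1/2:ℝ)^(t+2) / (Nat.factorial (t+2) : ℝ)
            ≤ x^(k*(m-1)) * (1/2:ℝ)^(t+2) / (2:ℝ)^(t+1) :=
          div_le_div_of_nonneg_left (by positivity) (by positivity) hf2
        have h6 : x^(k*(m-1)) * (1/2:ℝ)^(t+2) / (2:ℝ)^(t+1)
            = x^(k*(m-1)) * (2*(1/4:ℝ)^(t+2)) := by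
          rw [div_eq_iff (by positivity : ((2:ℝ)^(t+1)) ≠ 0)]
          rw [show ((1/4:ℝ)) = (1/2)*(1/2) by norm_num, mul_pow]
          rw [show ((1/2:ℝ)) = (2:ℝ)⁻¹ by norm_num, inv_pow]
          field_simp
          ring
        linarith
      linarith
    have htail : |∑ t ∈ range (k2+1), f (t+2)| ≤ x^(k*(m-1)) * (1/6:ℝ) := by
      calc |∑ t ∈ range (k2+1), f (t+2)| ≤ ∑ t ∈ range (k2+1), |f (t+2)| :=
            Finset.abs_sum_le_sum_abs _ _
        _ ≤ ∑ t ∈ range (k2+1), x^(k*(m-1)) * (2*(1/4:ℝ)^(t+2)) :=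
            Finset.sum_le_sum (fun t _ => hterm t)
        _ = x^(k*(m-1)) * ((2*(1/16:ℝ)) * ∑ t ∈ range (k2+1), (1/4:ℝ)^t) := by
            rw [Finset.mul_sum, Finset.mul_sum]
            apply Finset.sum_congr rfl
            intro t ht
            ring
        _ ≤ x^(k*(m-1)) * ((2*(1/16:ℝ)) * (4/3)) := by
            have hgeo : ∑ t ∈ range (k2+1), (1/4:ℝ)^t ≤ 4/3 := by
              rw [geom_sum_eq (by norm_num)]
              have h1 : (0:ℝ) ≤ (1/4:ℝ)^(k2+1) := by positivity
              have h2 : ((1/4:ℝ))^(k2+1) ≤ 1 := pow_le_one₀ (by norm_num) (by norm_num)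
              rw [div_le_iff_of_neg (by norm_num)]
              linarith
            apply mul_le_mul_of_nonneg_left _ (by positivity)
            apply mul_le_mul_of_nonneg_left hgeo (by norm_num)
        _ ≤ x^(k*(m-1)) * (1/6:ℝ) := by
            apply mul_le_mul_of_nonneg_left (by norm_num) (by positivity)
    have hSre2 : (1/2:ℝ) * x^(k*(m-1)) ≤ S.re := by
      rw [hSre, hsplit, hf0, hf1]
      have h7 := (abs_le.1 htail).1
      have h8 : (0:ℝ) ≤ x^(k*(m-1)) := by positivity
      linarith
    exact le_trans hSre2 (Complex.re_le_norm S)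
  calc (1/2:ℝ) * (m:ℝ)^k * x^(k*(m-1)) = (m:ℝ)^k * ((1/2:ℝ) * x^(k*(m-1))) := by ring
    _ ≤ (m:ℝ)^k * ‖S‖ := by
        apply mul_le_mul_of_nonneg_left hSb (by positivity)

theorem polynomial_lower_bound (m : ℕ) (hm : 2 ≤ m) (lam : ℂ)
    (hlam : lam = Complex.I * m ∨ lam = -(Complex.I * m))
    (θ : ℝ) (hθ : 2 / (m : ℝ) ≤ θ)
    (p : ℕ → Polynomial ℂ) (hp0 : p 0 = 1)
    (hprec : ∀ k, p (k + 1) =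
      Polynomial.C lam * Polynomial.X ^ (m - 1) * p k + Polynomial.derivative (p k)) :
    ∃ K : ℕ → ℕ, StrictMono K ∧
      ∀ j : ℕ, 1 ≤ j →
        0 < K j ∧
        4 * j * m ≤ K j * (m - 1) ∧ K j * (m - 1) ≤ (4 * j + 1) * m ∧
        (1 / 2 : ℝ) * (m : ℝ) ^ (K j) * (K j : ℝ) ^ (θ * (K j : ℝ) * ((m : ℝ) - 1))
          ≤ ‖(p (K j)).eval (((K j : ℝ) ^ θ : ℝ) : ℂ)‖ := by
  set d := m - 1 with hd_def
  have hd : 0 < d := by omega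
  set K : ℕ → ℕ := fun j => (4*j*m + d - 1) / d with hK_def
  have hKlb : ∀ j, 4*j*m ≤ K j * d := by
    intro j
    have h1 := Nat.div_add_mod (4*j*m + d - 1) d
    have h2 := Nat.mod_lt (4*j*m + d - 1) hd
    simp only [hK_def]
    rw [Nat.mul_comm _ d]
    omega
  have hKub : ∀ j, K j * d ≤ 4*j*m + d - 1 := by
    intro j
    have h1 := Nat.div_add_mod (4*j*m + d - 1) d
    simp only [hK_def]
    rw [Nat.mul_comm _ d]
    omega
  have hmono : StrictMono K := by
    apply strictMono_nat_of_lt_succ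
    intro j
    have h1 := hKlb (j+1)
    have h2 := hKub j
    have h3 : 4*(j+1)*m = 4*j*m + 4*m := by ring
    have h4 : K j * d < K (j+1) * d := by omega
    exact Nat.lt_of_mul_lt_mul_right h4
  refine ⟨K, hmono, ?_⟩
  intro j hj
  have hjm : 4*m ≤ 4*j*m := Nat.mul_le_mul_right m (by omega)
  have hK2 : 2 ≤ K j := by
    by_contra h
    push_neg at h
    have : K j * d ≤ 1 * d := Nat.mul_le_mul_right d (by omega)
    have := hKlb j
    omega
  have he : (4*j+1)*m = 4*j*m + m := by ring
  refine ⟨by omega, hKlb j, by have := hKub j; omega, ?_⟩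
  exact main_est m hm lam hlam θ hθ p hp0 hprec (K j) hK2
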